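/- Let k > 0, x₃ > 0, y₃ > 0 and set ω = √(x₃·(k·y₃² + 1)). Then the third focus value expression satisfies the identity and sign estimate: (π/(4y₃ω))·k²y₃³ − (π/(4y₃²ω²))·[ (2k²/ω)·x₃²·y₃⁴ + (k²/ω)·x₃·y₃⁴·(k·y₃² + 1) + 2ω·x₃ ] = −(π/(2ω))·( (k²/ω²)·x₃²·y₃² + x₃/y₃² ), and this quantity is strictly negative. -/

import Mathlib

/-- The third focus value identity and sign: with `ω = √(x₃(ky₃²+1))`,
`(π/(4y₃ω))k²y₃³ - (π/(4y₃²ω²))[(2k²/ω)x₃²y₃⁴ + (k²/ω)x₃y₃⁴(ky₃²+1) + 2ωx₃]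
  = -(π/(2ω))((k²/ω²)x₃²y₃² + x₃/y₃²) < 0`. -/
theorem stmt10 (k x₃ y₃ : ℝ) (hk : 0 < k) (hx₃ : 0 < x₃) (hy₃ : 0 < y₃)
    (ω : ℝ) (hω : ω = Real.sqrt (x₃ * (k * y₃ ^ 2 + 1))) :
    Real.pi / (4 * y₃ * ω) * (k ^ 2 * y₃ ^ 3)
        - Real.pi / (4 * y₃ ^ 2 * ω ^ 2) *
          (2 * k ^ 2 / ω * x₃ ^ 2 * y₃ ^ 4
            + k ^ 2 / ω * x₃ * y₃ ^ 4 * (k * y₃ ^ 2 + 1)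
            + 2 * ω * x₃)
      = -(Real.pi / (2 * ω)) *
          (k ^ 2 / ω ^ 2 * x₃ ^ 2 * y₃ ^ 2 + x₃ / y₃ ^ 2) ∧
    -(Real.pi / (2 * ω)) *
        (k ^ 2 / ω ^ 2 * x₃ ^ 2 * y₃ ^ 2 + x₃ / y₃ ^ 2) < 0 := by
  have harg : 0 < x₃ * (k * y₃ ^ 2 + 1) := by positivity
  have hωpos : 0 < ω := by rw [hω]; exact Real.sqrt_pos.mpr harg
  have hω2 : ω ^ 2 = x₃ * (k * y₃ ^ 2 + 1) := by
    rw [hω, Real.sq_sqrt harg.le]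
  constructor
  · have hω0 : ω ≠ 0 := hωpos.ne'
    have hy0 : y₃ ≠ 0 := hy₃.ne'
    field_simp
    linear_combination (2*k^2*y₃^4) * hω2
  · have h1 : 0 < Real.pi / (2 * ω) := by positivity
    have h2 : 0 < k ^ 2 / ω ^ 2 * x₃ ^ 2 * y₃ ^ 2 + x₃ / y₃ ^ 2 := by positivity
    nlinarith
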